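/- arXiv:1910.02665 — 5 statements merged into one kernel-verified Lean document; each statement's English description precedes it below -/
import Mathlib

section
/- Let real numbers δ > 0, α ≥ 1 satisfy δ ≥ 100α and a nonnegative integer s satisfy s·(2δ/5 − (s−1)) ≤ αδ. Then either s ≤ 3α or s ≥ δ/5. -/
/-- Quadratic-inequality core of the trimming lemma: if `δ > 0`, `α ≥ 1`, `δ ≥ 100α`
and a natural number `s` satisfies `s·(2δ/5 − (s−1)) ≤ αδ`, then `s ≤ 3α` or `s ≥ δ/5`. -/
theorem stmt_1 (δ α : ℝ) (hδ : 0 < δ) (hα : 1 ≤ α) (hδα : 100 * α ≤ δ)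
    (s : ℕ) (hs : (s : ℝ) * (2 * δ / 5 - ((s : ℝ) - 1)) ≤ α * δ) :
    (s : ℝ) ≤ 3 * α ∨ δ / 5 ≤ (s : ℝ) := by
  by_contra h
  push_neg at h
  obtain ⟨h1, h2⟩ := h
  nlinarith [mul_pos (sub_pos.2 h1) (sub_pos.2 h2), sq_nonneg ((s:ℝ) - 3*α), mul_pos hδ hδ]
end

section
/- Let G be a simple graph on n vertices and λ a positive integer. Define forests F₁, …, F_λ where F_i is a maximal spanning forest of G minus the edges of F₁, …, F_{i−1}, and let H = F₁ ∪ ⋯ ∪ F_λ. Then H has at most λ·n edges, and for every vertex set S with |∂_G S| ≤ λ we have ∂_G S = ∂_H S (every edge of G crossing S lies in H). -/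
open SimpleGraph

/-- Adding a non-connecting edge to an acyclic graph keeps it acyclic. -/
lemma aux_acyclic_sup_edge {V : Type*} {F : SimpleGraph V} (hF : F.IsAcyclic)
    {a b : V} (hab : a ≠ b) (hr : ¬ F.Reachable a b) : (F ⊔ edge a b).IsAcyclic := by
  intro u c hc
  by_cases hmem : s(a, b) ∈ c.edges
  · have : (F ⊔ edge a b).Adj a b ∧
        ((F ⊔ edge a b) \ fromEdgeSet {s(a, b)}).Reachable a b :=
      (adj_and_reachable_delete_edges_iff_exists_cycle).mpr ⟨u, c, hc, hmem⟩
    refine hr (this.2.mono ?_)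
    intro x y hxy
    rw [sdiff_adj, sup_adj, edge_adj] at hxy
    rcases hxy with ⟨hxy1, hxy2⟩
    rcases hxy1 with h | h
    · exact h
    · exfalso
      apply hxy2
      constructor
      · rcases h.1 with ⟨rfl, rfl⟩ | ⟨rfl, rfl⟩
        · rfl
        · exact Sym2.eq_swap
      · exact h.2
  · have hsub : ∀ e ∈ c.edges, e ∈ F.edgeSet := by
      intro e he
      induction e using Sym2.ind with
      | _ x y =>
        have := c.adj_of_mem_edges he
        rw [sup_adj, edge_adj] at this
        rcases this with h | h
        · exact h
        · exfalso
          apply hmem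
          rcases h.1 with ⟨rfl, rfl⟩ | ⟨rfl, rfl⟩
          · exact he
          · rwa [Sym2.eq_swap] at he
    exact hF (c.transfer F hsub) (hc.transfer hsub)

/-- An acyclic graph on a finite vertex type has at most `card V` edges. -/
lemma aux_acyclic_card {V : Type*} [Fintype V] [DecidableEq V] {F : SimpleGraph V}
    (hF : F.IsAcyclic) : F.edgeSet.ncard ≤ Fintype.card V := by
  classical
  cases isEmpty_or_nonempty V with
  | inl h =>
    have : F.edgeSet = ∅ := by
      ext e
      induction e using Sym2.ind with
      | _ x y => exact (h.false x).elim
    simp [this]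
  | inr h =>
    obtain ⟨K, ⟨hFK, hK⟩, hmax⟩ :=
      Set.Finite.exists_maximalFor id {K : SimpleGraph V | F ≤ K ∧ K.IsAcyclic}
        (Set.toFinite _) ⟨F, le_refl _, hF⟩
    have hconn : K.Connected := by
      rw [connected_iff]
      refine ⟨?_, h⟩
      intro a b
      by_contra hr
      have hab : a ≠ b := by rintro rfl; exact hr (Reachable.refl a)
      have hacy := aux_acyclic_sup_edge hK hab hr
      have : id K = id (K ⊔ edge a b) :=
        le_antisymm le_sup_left (hmax (j := K ⊔ edge a b) ⟨le_trans hFK le_sup_left, hacy⟩ le_sup_left)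
      simp only [id] at this
      have hadj : (K ⊔ edge a b).Adj a b := by
        rw [SimpleGraph.sup_adj, edge_adj]
        exact Or.inr ⟨Or.inl ⟨rfl, rfl⟩, hab⟩
      rw [← this] at hadj
      exact hr hadj.reachable
    haveI : Fintype K.edgeSet := Fintype.ofFinite _
    have htree : K.IsTree := ⟨hconn, hK⟩
    have hcard := htree.card_edgeFinset
    have hsub : F.edgeSet ⊆ K.edgeSet := edgeSet_mono hFK
    calc F.edgeSet.ncard ≤ K.edgeSet.ncard := Set.ncard_le_ncard hsub (Set.toFinite _)
      _ = K.edgeFinset.card := by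
          rw [Set.ncard_eq_toFinset_card']
          exact congrArg Finset.card (Finset.ext fun e => by simp)
      _ ≤ Fintype.card V := by omega

/-- A walk from inside `S` to outside `S` crosses `S`. -/
lemma aux_cross {V : Type*} {F : SimpleGraph V} {S : Set V} {a b : V}
    (h : F.Reachable a b) (ha : a ∈ S) (hb : b ∉ S) :
    ∃ u v, F.Adj u v ∧ u ∈ S ∧ v ∉ S := by
  obtain ⟨w⟩ := h
  induction w with
  | nil => exact absurd ha hb
  | @cons x y z hxy p ih =>
    by_cases hy : y ∈ S
    · exact ih hy hb
    · exact ⟨x, y, hxy, ha, hy⟩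


/-- Nagamochi–Ibaraki sparsification: let `F i` (for `i < lam`) be a maximal spanning
forest of `G` minus the edges of the previous forests, and `H` their union. Then `H`
has at most `lam · n` edges, and every cut of `G` of size at most `lam` is preserved:
all its crossing edges lie in `H`. -/
theorem stmt_7 {V : Type*} [Fintype V] [DecidableEq V]
    (G : SimpleGraph V) (lam : ℕ) (hlam : 1 ≤ lam)
    (F : Fin lam → SimpleGraph V)
    (hle : ∀ i : Fin lam, F i ≤ G \ (⨆ j : Fin lam, if (j : ℕ) < (i : ℕ) then F j else ⊥))
    (hforest : ∀ i, (F i).IsAcyclic)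
    (hmax : ∀ i : Fin lam, ∀ F' : SimpleGraph V,
      F' ≤ G \ (⨆ j : Fin lam, if (j : ℕ) < (i : ℕ) then F j else ⊥) →
      F'.IsAcyclic → F i ≤ F' → F' = F i)
    (H : SimpleGraph V) (hH : H = ⨆ i, F i) :
    H.edgeSet.ncard ≤ lam * Fintype.card V ∧
    ∀ S : Set V,
      {e ∈ G.edgeSet | ∃ a b, e = s(a, b) ∧ a ∈ S ∧ b ∉ S}.ncard ≤ lam →
      {e ∈ G.edgeSet | ∃ a b, e = s(a, b) ∧ a ∈ S ∧ b ∉ S}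
        = {e ∈ H.edgeSet | ∃ a b, e = s(a, b) ∧ a ∈ S ∧ b ∉ S} := by
  classical
  subst hH
  constructor
  · -- edge count
    have hfin : (⨆ i, F i).edgeSet.Finite := Set.toFinite _
    have hsubF : hfin.toFinset ⊆
        Finset.univ.biUnion (fun i => (Set.toFinite (F i).edgeSet).toFinset) := by
      intro e he
      rw [Set.Finite.mem_toFinset] at he
      induction e using Sym2.ind with
      | _ x y =>
        rw [SimpleGraph.mem_edgeSet, SimpleGraph.iSup_adj] at he
        obtain ⟨i, hi⟩ := he
        simp only [Finset.mem_biUnion, Finset.mem_univ, Set.Finite.mem_toFinset,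
          SimpleGraph.mem_edgeSet, true_and]
        exact ⟨i, hi⟩
    calc (⨆ i, F i).edgeSet.ncard = hfin.toFinset.card :=
          Set.ncard_eq_toFinset_card _ hfin
      _ ≤ (Finset.univ.biUnion (fun i => (Set.toFinite (F i).edgeSet).toFinset)).card :=
          Finset.card_le_card hsubF
      _ ≤ ∑ i : Fin lam, (Set.toFinite (F i).edgeSet).toFinset.card :=
          Finset.card_biUnion_le
      _ = ∑ i : Fin lam, (F i).edgeSet.ncard := by
          refine Finset.sum_congr rfl fun i _ => ?_
          rw [Set.ncard_eq_toFinset_card _ (Set.toFinite (F i).edgeSet)]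
      _ ≤ ∑ _i : Fin lam, Fintype.card V :=
          Finset.sum_le_sum fun i _ => aux_acyclic_card (hforest i)
      _ = lam * Fintype.card V := by
          rw [Finset.sum_const, Finset.card_univ, Fintype.card_fin, smul_eq_mul]
  · -- cut preservation
    intro S hS
    apply Set.Subset.antisymm
    · intro e he
      obtain ⟨heG, a, b, rfl, haS, hbS⟩ := he
      by_contra heH
      have hGab : G.Adj a b := heG
      have hab : a ≠ b := hGab.ne
      have heH' : ¬ (⨆ i, F i).Adj a b := fun h => heH ⟨h, a, b, rfl, haS, hbS⟩
      have hFadj : ∀ i, ¬ (F i).Adj a b := fun i hi =>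
        heH' (SimpleGraph.iSup_adj.mpr ⟨i, hi⟩)
      -- each forest connects a and b
      have hreach : ∀ i : Fin lam, (F i).Reachable a b := by
        intro i
        by_contra hr
        have hacy := aux_acyclic_sup_edge (hforest i) hab hr
        have hle' : F i ⊔ edge a b ≤
            G \ (⨆ j : Fin lam, if (j : ℕ) < (i : ℕ) then F j else ⊥) := by
          refine sup_le (hle i) ?_
          intro x y hxy
          rw [edge_adj] at hxy
          rw [SimpleGraph.sdiff_adj]
          constructor
          · rcases hxy.1 with ⟨rfl, rfl⟩ | ⟨rfl, rfl⟩
            · exact hGab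
            · exact hGab.symm
          · intro hcon
            rw [SimpleGraph.iSup_adj] at hcon
            obtain ⟨j, hj⟩ := hcon
            by_cases hji : (j : ℕ) < (i : ℕ)
            · rw [if_pos hji] at hj
              rcases hxy.1 with ⟨rfl, rfl⟩ | ⟨rfl, rfl⟩
              · exact hFadj j hj
              · exact hFadj j hj.symm
            · rw [if_neg hji] at hj
              exact hj
        have heq := hmax i _ hle' hacy le_sup_left
        have : (F i).Adj a b := by
          rw [← heq, SimpleGraph.sup_adj, edge_adj]
          exact Or.inr ⟨Or.inl ⟨rfl, rfl⟩, hab⟩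
        exact hFadj i this
      have hcross : ∀ i : Fin lam, ∃ x y, (F i).Adj x y ∧ x ∈ S ∧ y ∉ S :=
        fun i => aux_cross (hreach i) haS hbS
      choose u v huv hu hv using hcross
      set T := {e ∈ G.edgeSet | ∃ a b, e = s(a, b) ∧ a ∈ S ∧ b ∉ S} with hT
      set f : Fin lam → Sym2 V := fun i => s(u i, v i) with hf
      have hFG : ∀ i : Fin lam, F i ≤ G := fun i => le_trans (hle i) sdiff_le
      have hfT : ∀ i, f i ∈ T := fun i =>
        ⟨hFG i (huv i), u i, v i, rfl, hu i, hv i⟩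
      -- edges of distinct forests are distinct
      have hdisj : ∀ i j : Fin lam, (j : ℕ) < (i : ℕ) → ¬ (F j).Adj (u i) (v i) := by
        intro i j hji hcon
        have h1 := hle i (huv i)
        rw [SimpleGraph.sdiff_adj] at h1
        exact h1.2 (SimpleGraph.iSup_adj.mpr ⟨j, by rw [if_pos hji]; exact hcon⟩)
      have hinj : Function.Injective f := by
        intro i j hij
        by_contra hne
        have hne' : (i : ℕ) ≠ (j : ℕ) := fun h => hne (Fin.ext h)
        have hij' : s(u i, v i) = s(u j, v j) := hij
        rcases hne'.lt_or_gt with h | h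
        · have : (F i).Adj (u j) (v j) := by
            rw [← SimpleGraph.mem_edgeSet, ← hij']
            exact huv i
          exact hdisj j i h this
        · have : (F j).Adj (u i) (v i) := by
            rw [← SimpleGraph.mem_edgeSet, hij']
            exact huv j
          exact hdisj i j h this
      have heT : s(a, b) ∈ T := ⟨heG, a, b, rfl, haS, hbS⟩
      have henr : s(a, b) ∉ Set.range f := by
        rintro ⟨i, hi⟩
        apply heH'
        refine SimpleGraph.iSup_adj.mpr ⟨i, ?_⟩
        have hi' : s(u i, v i) = s(a, b) := hi
        rw [← SimpleGraph.mem_edgeSet, ← hi']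
        exact huv i
      have hins : insert (s(a, b)) (Set.range f) ⊆ T := by
        intro x hx
        rcases hx with rfl | ⟨i, rfl⟩
        · exact heT
        · exact hfT i
      have h1 : (insert (s(a, b)) (Set.range f)).ncard = (Set.range f).ncard + 1 :=
        Set.ncard_insert_of_notMem henr (Set.toFinite _)
      have h2 : (Set.range f).ncard = lam := by
        rw [← Nat.card_coe_set_eq, Nat.card_range_of_injective hinj, Nat.card_eq_fintype_card,
          Fintype.card_fin]
      have h3 := Set.ncard_le_ncard hins (Set.toFinite T)
      rw [h1, h2] at h3
      omega
    · intro e he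
      obtain ⟨heH, a, b, rfl, haS, hbS⟩ := he
      have hHG : (⨆ i, F i) ≤ G := iSup_le fun i => le_trans (hle i) sdiff_le
      exact ⟨hHG heH, a, b, rfl, haS, hbS⟩
end

section
/- Let G = (V, E) be a multigraph with minimum k-cut value |OPT|, and let S₁, …, S_{k+1} be any partition of V into k+1 nonempty parts. Then |OPT| ≤ (1 − 1/C(k+1,2)) · |E[S₁, …, S_{k+1}]|, where E[S₁, …, S_{k+1}] is the set of edges with endpoints in two different parts. -/
/-- `P` is a partition of the vertex set into `k` nonempty parts. -/
def IsPartitionOn {V : Type*} (k : ℕ) (P : Fin k → Finset V) : Prop :=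
  (∀ i, (P i).Nonempty) ∧ (∀ i j, i ≠ j → Disjoint (P i) (P j)) ∧ ∀ v : V, ∃ i, v ∈ P i

/-- The number of edges of the multigraph (edge identifiers `ι`, endpoints `ends`)
crossing between different parts of the partition `P`. -/
def cutVal {V ι : Type*} [Fintype ι] [DecidableEq V] {k : ℕ} (ends : ι → V × V)
    (P : Fin k → Finset V) : ℕ :=
  (Finset.univ.filter fun e : ι => ∀ i, ¬((ends e).1 ∈ P i ∧ (ends e).2 ∈ P i)).card

/-- Claim 2.8 of Gupta–Lee–Li: for any partition of the vertices of a multigraph into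
`k+1` nonempty parts, the minimum `k`-cut value `opt` satisfies
`opt ≤ (1 − 1/C(k+1,2)) · |E[S₁,…,S_{k+1}]|`. -/
theorem stmt_8 {V ι : Type*} [Fintype V] [DecidableEq V] [Fintype ι]
    (ends : ι → V × V) (k : ℕ) (hk : 1 ≤ k) (opt : ℕ)
    (hopt : IsLeast
      {c : ℕ | ∃ P : Fin k → Finset V, IsPartitionOn k P ∧ c = cutVal ends P} opt)
    (S : Fin (k + 1) → Finset V) (hS : IsPartitionOn (k + 1) S) :
    (opt : ℝ) ≤ (1 - 1 / ((k + 1).choose 2 : ℝ)) * (cutVal ends S : ℝ) := by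
  classical
  obtain ⟨hne, hdisj, hcov⟩ := hS
  choose idx hidx using hcov
  have hidx_uniq : ∀ v i, v ∈ S i → idx v = i := by
    intro v i hv
    by_contra h
    exact (Finset.disjoint_left.mp (hdisj _ _ h) (hidx v)) hv
  set CS : Finset ι :=
    Finset.univ.filter (fun e : ι => ∀ i, ¬((ends e).1 ∈ S i ∧ (ends e).2 ∈ S i)) with hCSdef
  have hCScut : cutVal ends S = CS.card := rfl
  set B : Fin (k + 1) × Fin (k + 1) → Finset ι := fun p =>
    CS.filter (fun e =>
      (idx (ends e).1 = p.1 ∧ idx (ends e).2 = p.2) ∨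
      (idx (ends e).1 = p.2 ∧ idx (ends e).2 = p.1)) with hBdef
  -- key inequality via merging parts p.1 and p.2
  have key : ∀ p : Fin (k + 1) × Fin (k + 1), p.1 ≠ p.2 → opt + (B p).card ≤ CS.card := by
    rintro ⟨i, j⟩ (hij : i ≠ j)
    obtain ⟨m0, hm0⟩ := Fin.exists_succAbove_eq hij
    set P : Fin k → Finset V := fun m =>
      if j.succAbove m = i then S i ∪ S j else S (j.succAbove m) with hPdef
    have hP : IsPartitionOn k P := by
      refine ⟨?_, ?_, ?_⟩
      · intro m
        by_cases h : j.succAbove m = i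
        · simp only [hPdef, if_pos h]
          exact (hne i).inl
        · simp only [hPdef, if_neg h]
          exact hne _
      · intro m m' hmm'
        have hab : j.succAbove m ≠ j.succAbove m' :=
          fun h => hmm' (Fin.succAbove_right_injective h)
        simp only [hPdef]
        split_ifs with h1 h2 h2
        · exact absurd (h1.trans h2.symm) hab
        · rw [Finset.disjoint_union_left]
          exact ⟨hdisj _ _ (Ne.symm h2), hdisj _ _ (Ne.symm (Fin.succAbove_ne j m'))⟩
        · rw [Finset.disjoint_union_right]
          exact ⟨hdisj _ _ h1, hdisj _ _ (Fin.succAbove_ne j m)⟩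
        · exact hdisj _ _ hab
      · intro v
        rcases eq_or_ne (idx v) j with h | h
        · refine ⟨m0, ?_⟩
          simp only [hPdef, if_pos hm0]
          exact Finset.mem_union_right _ (h ▸ hidx v)
        · obtain ⟨m, hm⟩ := Fin.exists_succAbove_eq h
          refine ⟨m, ?_⟩
          have hv : v ∈ S (j.succAbove m) := by rw [hm]; exact hidx v
          simp only [hPdef]
          split_ifs with h1
          · rw [h1] at hv; exact Finset.mem_union_left _ hv
          · exact hv
    set CP : Finset ι :=
      Finset.univ.filter (fun e : ι => ∀ m, ¬((ends e).1 ∈ P m ∧ (ends e).2 ∈ P m)) with hCPdef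
    have hopt_le : opt ≤ CP.card := hopt.2 ⟨P, hP, rfl⟩
    have hBij : ∀ e ∈ B (i, j), (ends e).1 ∈ P m0 ∧ (ends e).2 ∈ P m0 := by
      intro e he
      simp only [hBdef, Finset.mem_filter] at he
      have hPm0 : P m0 = S i ∪ S j := by simp only [hPdef, if_pos hm0]
      rcases he.2 with ⟨h1, h2⟩ | ⟨h1, h2⟩
      · exact ⟨hPm0 ▸ Finset.mem_union_left _ (h1 ▸ hidx _),
          hPm0 ▸ Finset.mem_union_right _ (h2 ▸ hidx _)⟩
      · exact ⟨hPm0 ▸ Finset.mem_union_right _ (h1 ▸ hidx _),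
          hPm0 ▸ Finset.mem_union_left _ (h2 ▸ hidx _)⟩
    have hdisj2 : Disjoint CP (B (i, j)) := by
      rw [Finset.disjoint_left]
      intro e heCP heB
      simp only [hCPdef, Finset.mem_filter] at heCP
      exact heCP.2 m0 (hBij e heB)
    have hsubCP : CP ⊆ CS := by
      intro e he
      simp only [hCPdef, Finset.mem_filter] at he
      simp only [hCSdef, Finset.mem_filter, Finset.mem_univ, true_and]
      intro l ⟨h1, h2⟩
      rcases eq_or_ne l j with rfl | hl
      · refine he.2 m0 ?_
        have hPm0 : P m0 = S i ∪ S l := by simp only [hPdef, if_pos hm0]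
        exact ⟨hPm0 ▸ Finset.mem_union_right _ h1, hPm0 ▸ Finset.mem_union_right _ h2⟩
      · obtain ⟨m, hm⟩ := Fin.exists_succAbove_eq hl
        refine he.2 m ?_
        simp only [hPdef]
        split_ifs with hI
        · rw [hI] at hm
          exact ⟨Finset.mem_union_left _ (hm ▸ h1), Finset.mem_union_left _ (hm ▸ h2)⟩
        · rw [hm]; exact ⟨h1, h2⟩
    have hsubB : B (i, j) ⊆ CS := Finset.filter_subset _ _
    calc opt + (B (i, j)).card ≤ CP.card + (B (i, j)).card := by omega
      _ = (CP ∪ B (i, j)).card := (Finset.card_union_of_disjoint hdisj2).symm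
      _ ≤ CS.card := Finset.card_le_card (Finset.union_subset hsubCP hsubB)
  -- double counting
  set D : Finset (Fin (k + 1) × Fin (k + 1)) := Finset.univ.offDiag with hDdef
  have hane : ∀ e ∈ CS, idx (ends e).1 ≠ idx (ends e).2 := by
    intro e he hab
    simp only [hCSdef, Finset.mem_filter] at he
    exact he.2 (idx (ends e).2) ⟨hab ▸ hidx _, hidx _⟩
  have hsum : ∑ p ∈ D, (B p).card = 2 * CS.card := by
    have : ∀ p ∈ D, (B p).card = ∑ e ∈ CS,
        (if (idx (ends e).1 = p.1 ∧ idx (ends e).2 = p.2) ∨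
            (idx (ends e).1 = p.2 ∧ idx (ends e).2 = p.1) then 1 else 0) := by
      intro p _
      simp only [hBdef]
      rw [Finset.card_filter]
    rw [Finset.sum_congr rfl this, Finset.sum_comm]
    have inner : ∀ e ∈ CS, (∑ p ∈ D,
        (if (idx (ends e).1 = p.1 ∧ idx (ends e).2 = p.2) ∨
            (idx (ends e).1 = p.2 ∧ idx (ends e).2 = p.1) then 1 else 0)) = 2 := by
      intro e he
      set a := idx (ends e).1
      set b := idx (ends e).2
      have hab : a ≠ b := hane e he
      rw [← Finset.card_filter]
      have : D.filter (fun p => (a = p.1 ∧ b = p.2) ∨ (a = p.2 ∧ b = p.1)) =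
          {(a, b), (b, a)} := by
        ext ⟨x, y⟩
        simp only [Finset.mem_filter, hDdef, Finset.mem_offDiag, Finset.mem_univ, true_and,
          Finset.mem_insert, Finset.mem_singleton, Prod.mk.injEq]
        constructor
        · rintro ⟨hxy, ⟨rfl, rfl⟩ | ⟨rfl, rfl⟩⟩
          · left; exact ⟨rfl, rfl⟩
          · right; exact ⟨rfl, rfl⟩
        · rintro (⟨rfl, rfl⟩ | ⟨rfl, rfl⟩)
          · exact ⟨hab, Or.inl ⟨rfl, rfl⟩⟩
          · exact ⟨hab.symm, Or.inr ⟨rfl, rfl⟩⟩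
      rw [this]
      rw [Finset.card_insert_of_notMem (by simp [Prod.ext_iff]; exact fun h _ => hab h),
        Finset.card_singleton]
    rw [Finset.sum_congr rfl inner, Finset.sum_const, smul_eq_mul, mul_comm]
  have hDne : D.Nonempty := by
    refine ⟨(⟨0, by omega⟩, ⟨1, by omega⟩), ?_⟩
    simp [hDdef, Finset.mem_offDiag, Fin.ext_iff]
  have hsum2 : ∑ p ∈ D, (2 * CS.card) ≤ ∑ p ∈ D, D.card * (B p).card := by
    rw [Finset.sum_const, smul_eq_mul, ← Finset.mul_sum, hsum]
  obtain ⟨p, hpD, hple⟩ := Finset.exists_le_of_sum_le hDne hsum2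
  have hp12 : p.1 ≠ p.2 := by
    have := Finset.mem_offDiag.mp (hDdef ▸ hpD)
    exact this.2.2
  have hkey := key p hp12
  -- arithmetic
  have hDcard : D.card = 2 * ((k + 1).choose 2) := by
    have h1 : D.card = (k + 1) * (k + 1) - (k + 1) := by
      simp [hDdef, Finset.offDiag_card]
    have h3 : 2 * ((k + 1).choose 2) = (k + 1) * k := by
      rw [Nat.choose_two_right]
      have hd : (2 : ℕ) ∣ (k + 1) * k := by
        rw [mul_comm]; exact (Nat.even_mul_succ_self k).two_dvd
      simpa using Nat.mul_div_cancel' hd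
    have h4 : (k + 1) * (k + 1) = (k + 1) * k + (k + 1) := by ring
    omega
  have hx : 2 * CS.card ≤ D.card * (B p).card := hple
  rw [hDcard] at hx
  have hx2 : CS.card ≤ (k + 1).choose 2 * (B p).card := by
    have h5 : 2 * ((k + 1).choose 2) * (B p).card = 2 * ((k + 1).choose 2 * (B p).card) := by
      ring
    omega
  have hCpos : 0 < (k + 1).choose 2 := Nat.choose_pos (by omega)
  rw [hCScut]
  have hCpos' : (0 : ℝ) < ((k + 1).choose 2 : ℝ) := by exact_mod_cast hCpos
  have hx3 : (CS.card : ℝ) ≤ ((k + 1).choose 2 : ℝ) * ((B p).card : ℝ) := by exact_mod_cast hx2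
  have hkey' : (opt : ℝ) + ((B p).card : ℝ) ≤ (CS.card : ℝ) := by exact_mod_cast hkey
  have hdivle : (CS.card : ℝ) / ((k + 1).choose 2 : ℝ) ≤ ((B p).card : ℝ) := by
    rw [div_le_iff₀ hCpos']
    nlinarith [hx3]
  have hring : (1 - 1 / ((k + 1).choose 2 : ℝ)) * (CS.card : ℝ)
      = (CS.card : ℝ) - (CS.card : ℝ) / ((k + 1).choose 2 : ℝ) := by
    ring
  linarith
end

section
/- Let G = (V,E) be a simple graph on n vertices and k ≥ 3. Construct H by adding a clique W of size k²·n disjoint from V, and for each v ∈ V adding n − deg_G(v) edges from v to distinct vertices of W. Then H has a k-cut of value (k−1)n − C(k−1,2) if and only if G contains a clique on k−1 vertices; moreover the minimum k-cut value of H is exactly (k−1)n − (maximum number of edges among any k−1 vertices of G), assuming n is sufficiently large relative to k (e.g. n > k³). -/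
attribute [local instance] Classical.propDecidable

/-- Number of edges of the simple graph `H` crossing between parts of the partition. -/
noncomputable def cutValS {X : Type*} [Fintype X] (H : SimpleGraph X) {k : ℕ}
    (P : Fin k → Finset X) : ℕ :=
  (H.edgeFinset.filter fun e => ∀ i, ¬ ∀ x ∈ e, x ∈ P i).card

set_option linter.unusedSectionVars false
set_option linter.unusedVariables false
set_option maxHeartbeats 4000000
open Finset




lemma choose_two_succ (x : ℕ) : (x+1).choose 2 = x.choose 2 + x := by
  rw [Nat.choose_succ_succ]
  simp [Nat.choose_one_right, Nat.add_comm]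

lemma choose2_add_choose2 (x y : ℕ) : (x+1).choose 2 + (y+1).choose 2 ≤ (x+y+1).choose 2 := by
  induction y with
  | zero => simp
  | succ n ih =>
    have h1 := choose_two_succ (n+1)
    have h2 := choose_two_succ (x+n+1)
    have h3 : x + (n+1) + 1 = (x+n+1)+1 := by ring
    rw [h3, h2, h1]
    omega

lemma sum_choose2 {ι : Type*} (s : Finset ι) (f : ι → ℕ) :
    (∑ i ∈ s, ((f i)+1).choose 2) ≤ ((∑ i ∈ s, f i) + 1).choose 2 := by
  induction s using Finset.cons_induction with
  | empty => simp
  | cons a s ha ih =>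
    rw [Finset.sum_cons, Finset.sum_cons]
    calc ((f a)+1).choose 2 + ∑ i ∈ s, ((f i)+1).choose 2
        ≤ ((f a)+1).choose 2 + ((∑ i ∈ s, f i)+1).choose 2 := by omega
      _ ≤ (f a + (∑ i ∈ s, f i) + 1).choose 2 := choose2_add_choose2 _ _
      _ = ((f a + ∑ i ∈ s, f i) + 1).choose 2 := by ring_nf

-- counting: sum of degrees over A = sum over edges of #endpoints in A
lemma sum_deg_eq {X : Type*} [Fintype X] [DecidableEq X] (H : SimpleGraph X)
    (A : Finset X) :
    (∑ a ∈ A, H.degree a) = ∑ e ∈ H.edgeFinset, (A.filter (· ∈ e)).card := by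
  classical
  have : ∀ a, H.degree a = (H.edgeFinset.filter (a ∈ ·)).card := by
    intro a
    rw [← SimpleGraph.card_incidenceFinset_eq_degree, SimpleGraph.incidenceFinset_eq_filter]
  simp_rw [this, Finset.card_filter]
  exact Finset.sum_comm' (by intros; tauto)


section
variable {X : Type*} [Fintype X] [DecidableEq X] (A : Finset X)

lemma cnt_two {e : Sym2 X} (he : ¬ e.IsDiag) (h : ∀ x ∈ e, x ∈ A) :
    (A.filter (· ∈ e)).card = 2 := by
  induction e with
  | _ x y =>
    have hxy : x ≠ y := by simpa using he
    have : A.filter (· ∈ s(x,y)) = {x, y} := by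
      ext a
      simp only [Finset.mem_filter, Sym2.mem_iff, Finset.mem_insert, Finset.mem_singleton]
      constructor
      · tauto
      · rintro (rfl | rfl)
        · exact ⟨h a (by simp), Or.inl rfl⟩
        · exact ⟨h a (by simp), Or.inr rfl⟩
    rw [this, Finset.card_pair hxy]

lemma cnt_one {e : Sym2 X} (he : ¬ e.IsDiag) (h1 : ∃ x ∈ e, x ∈ A)
    (h2 : ¬ ∀ x ∈ e, x ∈ A) : (A.filter (· ∈ e)).card = 1 := by
  induction e with
  | _ x y =>
    have hxy : x ≠ y := by simpa using he
    push_neg at h2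
    obtain ⟨z, hz, hzA⟩ := h2
    obtain ⟨u, hu, huA⟩ := h1
    rw [Sym2.mem_iff] at hz hu
    have : A.filter (· ∈ s(x,y)) = {u} := by
      ext a
      simp only [Finset.mem_filter, Sym2.mem_iff, Finset.mem_singleton]
      constructor
      · rintro ⟨haA, (rfl | rfl)⟩ <;>
        · rcases hu with rfl | rfl <;> rcases hz with rfl | rfl <;> tauto
      · rintro rfl
        exact ⟨huA, hu⟩
    rw [this, Finset.card_singleton]

lemma cnt_zero {e : Sym2 X} (h : ¬ ∃ x ∈ e, x ∈ A) : (A.filter (· ∈ e)).card = 0 := by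
  rw [Finset.card_eq_zero, Finset.filter_eq_empty_iff]
  intro a ha
  exact fun hmem => h ⟨a, hmem, ha⟩

lemma master (H : SimpleGraph X) :
    ∑ a ∈ A, H.degree a
      = 2 * (H.edgeFinset.filter (fun e => ∀ x ∈ e, x ∈ A)).card
        + (H.edgeFinset.filter (fun e => (∃ x ∈ e, x ∈ A) ∧ ¬ ∀ x ∈ e, x ∈ A)).card := by
  rw [sum_deg_eq]
  rw [← Finset.sum_filter_add_sum_filter_not H.edgeFinset (fun e => ∀ x ∈ e, x ∈ A)]
  have h1 : ∑ e ∈ H.edgeFinset.filter (fun e => ∀ x ∈ e, x ∈ A), (A.filter (· ∈ e)).card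
      = 2 * (H.edgeFinset.filter (fun e => ∀ x ∈ e, x ∈ A)).card := by
    rw [Finset.sum_congr rfl (fun e he => ?_), Finset.sum_const, smul_eq_mul, mul_comm]
    rw [Finset.mem_filter] at he
    exact cnt_two A (SimpleGraph.not_isDiag_of_mem_edgeFinset he.1) he.2
  have h2 : ∑ e ∈ H.edgeFinset.filter (fun e => ¬ ∀ x ∈ e, x ∈ A), (A.filter (· ∈ e)).card
      = (H.edgeFinset.filter (fun e => (∃ x ∈ e, x ∈ A) ∧ ¬ ∀ x ∈ e, x ∈ A)).card := by
    rw [← Finset.sum_filter_add_sum_filter_not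
      (H.edgeFinset.filter (fun e => ¬ ∀ x ∈ e, x ∈ A)) (fun e => ∃ x ∈ e, x ∈ A)]
    have h3 : ∑ e ∈ (H.edgeFinset.filter (fun e => ¬ ∀ x ∈ e, x ∈ A)).filter
        (fun e => ∃ x ∈ e, x ∈ A), (A.filter (· ∈ e)).card
        = (H.edgeFinset.filter (fun e => (∃ x ∈ e, x ∈ A) ∧ ¬ ∀ x ∈ e, x ∈ A)).card := by
      rw [Finset.filter_filter]
      rw [Finset.sum_congr rfl (fun e he => ?_), Finset.sum_const, smul_eq_mul, mul_one]
      · apply Finset.card_bij (fun e _ => e) <;> simp +contextual [and_comm]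
      · rw [Finset.mem_filter] at he
        exact cnt_one A (SimpleGraph.not_isDiag_of_mem_edgeFinset he.1) he.2.2 he.2.1
    have h4 : ∑ e ∈ (H.edgeFinset.filter (fun e => ¬ ∀ x ∈ e, x ∈ A)).filter
        (fun e => ¬ ∃ x ∈ e, x ∈ A), (A.filter (· ∈ e)).card = 0 := by
      apply Finset.sum_eq_zero
      intro e he
      rw [Finset.mem_filter] at he
      exact cnt_zero A he.2
    omega
  omega
end

section
variable {V : Type*} [Fintype V] [DecidableEq V] (G : SimpleGraph V)

lemma inside_subset (S : Finset V) :
    G.edgeFinset.filter (fun e => ∀ x ∈ e, x ∈ S) ⊆ S.offDiag.image Sym2.mk.uncurry := by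
  intro e he
  rw [Finset.mem_filter] at he
  obtain ⟨he1, he2⟩ := he
  have hd := SimpleGraph.not_isDiag_of_mem_edgeFinset he1
  induction e with
  | _ x y =>
    have hxy : x ≠ y := by simpa using hd
    refine Finset.mem_image.2 ⟨(x, y), Finset.mem_offDiag.2 ⟨he2 x (by simp), he2 y (by simp), hxy⟩, rfl⟩

lemma inside_le (S : Finset V) :
    (G.edgeFinset.filter (fun e => ∀ x ∈ e, x ∈ S)).card ≤ S.card.choose 2 := by
  calc _ ≤ (S.offDiag.image Sym2.mk.uncurry).card := Finset.card_le_card (inside_subset G S)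
    _ = S.card.choose 2 := Sym2.card_image_offDiag S

lemma inside_lt (S : Finset V) {x y : V} (hx : x ∈ S) (hy : y ∈ S) (hxy : x ≠ y)
    (hna : ¬ G.Adj x y) :
    (G.edgeFinset.filter (fun e => ∀ x ∈ e, x ∈ S)).card + 1 ≤ S.card.choose 2 := by
  have hsub : G.edgeFinset.filter (fun e => ∀ x ∈ e, x ∈ S)
      ⊆ (S.offDiag.image Sym2.mk.uncurry).erase s(x, y) := by
    intro e he
    refine Finset.mem_erase.2 ⟨?_, inside_subset G S he⟩
    rintro rfl
    rw [Finset.mem_filter, SimpleGraph.mem_edgeFinset, SimpleGraph.mem_edgeSet] at he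
    exact hna he.1
  calc (G.edgeFinset.filter (fun e => ∀ x ∈ e, x ∈ S)).card + 1
      ≤ ((S.offDiag.image Sym2.mk.uncurry).erase s(x, y)).card + 1 := by
        exact Nat.add_le_add_right (Finset.card_le_card hsub) 1
    _ = (S.offDiag.image Sym2.mk.uncurry).card := by
        rw [Finset.card_erase_of_mem]
        · have : 0 < (S.offDiag.image Sym2.mk.uncurry).card := by
            refine Finset.card_pos.2 ⟨s(x,y), Finset.mem_image.2 ⟨(x,y), Finset.mem_offDiag.2 ⟨hx, hy, hxy⟩, rfl⟩⟩
          omega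
        · exact Finset.mem_image.2 ⟨(x,y), Finset.mem_offDiag.2 ⟨hx, hy, hxy⟩, rfl⟩
    _ = S.card.choose 2 := Sym2.card_image_offDiag S

lemma clique_inside (S : Finset V) (hcl : ∀ x ∈ S, ∀ y ∈ S, x ≠ y → G.Adj x y) :
    (G.edgeFinset.filter (fun e => ∀ x ∈ e, x ∈ S)).card = S.card.choose 2 := by
  have : G.edgeFinset.filter (fun e => ∀ x ∈ e, x ∈ S) = S.offDiag.image Sym2.mk.uncurry := by
    apply Finset.Subset.antisymm (inside_subset G S)
    intro e he
    obtain ⟨⟨x, y⟩, hxy, rfl⟩ := Finset.mem_image.1 he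
    rw [Finset.mem_offDiag] at hxy
    refine Finset.mem_filter.2 ⟨?_, ?_⟩
    · rw [Function.uncurry_apply_pair, SimpleGraph.mem_edgeFinset, SimpleGraph.mem_edgeSet]
      exact hcl x hxy.1 y hxy.2.1 hxy.2.2
    · intro z hz
      rw [Function.uncurry_apply_pair, Sym2.mem_iff] at hz
      rcases hz with rfl | rfl
      · exact hxy.1
      · exact hxy.2.1
  rw [this, Sym2.card_image_offDiag]

lemma inside_erase (T : Finset V) (v : V) (hv : v ∈ T) (hT : 1 ≤ T.card) :
    (G.edgeFinset.filter fun e => ∀ x ∈ e, x ∈ T).card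
      ≤ (G.edgeFinset.filter fun e => ∀ x ∈ e, x ∈ T.erase v).card + (T.card - 1) := by
  classical
  have hsplit := Finset.card_filter_add_card_filter_not
    (s := G.edgeFinset.filter fun e => ∀ x ∈ e, x ∈ T) (p := fun e => v ∈ e)
  have h1 : ((G.edgeFinset.filter fun e => ∀ x ∈ e, x ∈ T).filter fun e => ¬ v ∈ e)
      ⊆ G.edgeFinset.filter fun e => ∀ x ∈ e, x ∈ T.erase v := by
    intro e he
    simp only [Finset.mem_filter] at he ⊢
    refine ⟨he.1.1, fun x hx => Finset.mem_erase.2 ⟨?_, he.1.2 x hx⟩⟩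
    rintro rfl
    exact he.2 hx
  have h2 : ((G.edgeFinset.filter fun e => ∀ x ∈ e, x ∈ T).filter fun e => v ∈ e).card
      ≤ (T.erase v).card := by
    apply Finset.card_le_card_of_injOn (fun e => if h : v ∈ e then Sym2.Mem.other' h else v)
    · intro e he
      simp only [Finset.mem_coe, Finset.mem_filter] at he ⊢
      rw [dif_pos he.2]
      have hsp := Sym2.other_spec' he.2
      have hmem : Sym2.Mem.other' he.2 ∈ e := Sym2.other_mem' he.2
      refine Finset.mem_erase.2 ⟨?_, he.1.2 _ hmem⟩
      intro hEq
      have hd := SimpleGraph.not_isDiag_of_mem_edgeFinset he.1.1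
      rw [← hsp, hEq] at hd
      simp at hd
    · intro e1 he1 e2 he2 hEq
      simp only [Finset.mem_coe, Finset.mem_filter] at he1 he2
      dsimp only at hEq
      rw [dif_pos he1.2, dif_pos he2.2] at hEq
      rw [← Sym2.other_spec' he1.2, ← Sym2.other_spec' he2.2, hEq]
  have h3 : (T.erase v).card = T.card - 1 := Finset.card_erase_of_mem hv
  have := Finset.card_le_card h1
  omega

end

section
variable {V : Type*} [Fintype V] [DecidableEq V] (G : SimpleGraph V)

lemma greedy (k maxE : ℕ)
    (hmax2 : ∀ S : Finset V, S.card = k - 1 →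
      (G.edgeFinset.filter fun e => ∀ x ∈ e, x ∈ S).card ≤ maxE) :
    ∀ c (T : Finset V), T.card = (k-1) + c →
      (G.edgeFinset.filter fun e => ∀ x ∈ e, x ∈ T).card + (k-1).choose 2
        ≤ maxE + T.card.choose 2 := by
  intro c
  induction c with
  | zero =>
    intro T hT
    have := hmax2 T (by omega)
    have hch : T.card.choose 2 = (k-1).choose 2 := by rw [hT, Nat.add_zero]
    omega
  | succ c ih =>
    intro T hT
    have hpos : 0 < T.card := by omega
    obtain ⟨v, hv⟩ := Finset.card_pos.1 hpos
    have hrec := ih (T.erase v) (by rw [Finset.card_erase_of_mem hv]; omega)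
    have herase := inside_erase G T v hv (by omega)
    have hch : T.card.choose 2 = ((k-1)+c).choose 2 + ((k-1)+c) := by
      have : T.card = ((k-1)+c) + 1 := by omega
      rw [this, choose_two_succ]
    have hch2 : (T.erase v).card = (k-1)+c := by rw [Finset.card_erase_of_mem hv]; omega
    rw [hch2] at hrec
    omega

end

section
variable {V W : Type*} [Fintype V] [DecidableEq V] [Fintype W] [DecidableEq W]

lemma transfer (G : SimpleGraph V) (H : SimpleGraph (V ⊕ W))
    (hHV : ∀ u v : V, H.Adj (.inl u) (.inl v) ↔ G.Adj u v) (S : Finset V) :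
    (H.edgeFinset.filter fun e => ∀ x ∈ e, x ∈ S.image Sum.inl).card
      = (G.edgeFinset.filter fun e => ∀ x ∈ e, x ∈ S).card := by
  classical
  symm
  apply Finset.card_bij (fun e _ => Sym2.map Sum.inl e)
  · intro e he
    rw [Finset.mem_filter] at he ⊢
    obtain ⟨he1, he2⟩ := he
    induction e with
    | _ u v =>
      rw [SimpleGraph.mem_edgeFinset, SimpleGraph.mem_edgeSet] at he1
      constructor
      · rw [Sym2.map_pair_eq, SimpleGraph.mem_edgeFinset, SimpleGraph.mem_edgeSet]
        exact (hHV u v).2 he1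
      · intro x hx
        rw [Sym2.map_pair_eq, Sym2.mem_iff] at hx
        rcases hx with rfl | rfl
        · exact Finset.mem_image_of_mem _ (he2 u (by simp))
        · exact Finset.mem_image_of_mem _ (he2 v (by simp))
  · intro e1 _ e2 _ hEq
    exact Sym2.map.injective Sum.inl_injective hEq
  · intro b hb
    rw [Finset.mem_filter] at hb
    obtain ⟨hb1, hb2⟩ := hb
    induction b with
    | _ x y =>
      obtain ⟨u, hu, rfl⟩ := Finset.mem_image.1 (hb2 x (by simp))
      obtain ⟨v', hv', rfl⟩ := Finset.mem_image.1 (hb2 y (by simp))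
      rw [SimpleGraph.mem_edgeFinset, SimpleGraph.mem_edgeSet] at hb1
      refine ⟨s(u, v'), Finset.mem_filter.2 ⟨?_, ?_⟩, ?_⟩
      · rw [SimpleGraph.mem_edgeFinset, SimpleGraph.mem_edgeSet]
        exact (hHV u v').1 hb1
      · intro x hx
        rw [Sym2.mem_iff] at hx
        rcases hx with rfl | rfl <;> assumption
      · rw [Sym2.map_pair_eq]
end

lemma two_mul_choose_two (x : ℕ) : 2 * x.choose 2 = x * (x - 1) := by
  induction x with
  | zero => simp
  | succ y ih =>
    rw [choose_two_succ, Nat.mul_add, ih]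
    cases y with
    | zero => simp
    | succ z =>
      simp only [Nat.add_sub_cancel]
      ring

lemma star_ineq (k n m : ℕ) (hk : 3 ≤ k) (hm : k - 1 ≤ m) (hmn : m ≤ n) :
    (k-1)*n + m.choose 2 + (m - (k-1) + 1).choose 2 ≤ m*n + (k-1).choose 2 := by
  obtain ⟨K, rfl⟩ : ∃ K, k = K + 3 := ⟨k - 3, by omega⟩
  obtain ⟨a, ham⟩ : ∃ a, m = a + K + 2 := ⟨m - (K+2), by omega⟩
  obtain ⟨b, hbn⟩ : ∃ b, n = m + b := ⟨n - m, by omega⟩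
  have e1 : K + 3 - 1 = K + 2 := by omega
  have e2 : m - (K + 2) + 1 = a + 1 := by omega
  rw [e1, e2]
  apply Nat.le_of_mul_le_mul_left _ (show 0 < 2 by norm_num)
  have c1 : 2 * m.choose 2 = (a+K+2) * (a+K+1) := by
    rw [two_mul_choose_two, ham]
    rfl
  have c2 : 2 * (a+1).choose 2 = (a+1) * a := by
    rw [two_mul_choose_two]
    simp
  have c3 : 2 * (K+2).choose 2 = (K+2) * (K+1) := by
    rw [two_mul_choose_two]
    simp
  subst ham hbn
  nlinarith [c1, c2, c3]


/-- Hardness reduction (proof of the lower bound theorem): given a simple graph `G` on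
`n` vertices, form `H` on `V ⊕ W` where `W` is a clique of size `k²n`, `H` agrees with
`G` on `V`, and every `v ∈ V` gets total degree exactly `n` by edges to distinct
vertices of `W`. Then, for `n > k³`, the minimum `k`-cut of `H` equals
`(k−1)n − C(k−1,2)` iff `G` has a `(k−1)`-clique; moreover it equals
`(k−1)n − (max number of edges among any k−1 vertices of G)`. -/
theorem stmt_16 {V W : Type*} [Fintype V] [DecidableEq V] [Fintype W] [DecidableEq W]
    (G : SimpleGraph V) (k : ℕ) (hk : 3 ≤ k)
    (hn : k ^ 3 < Fintype.card V)
    (hW : Fintype.card W = k ^ 2 * Fintype.card V)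
    (H : SimpleGraph (V ⊕ W))
    (hHV : ∀ u v : V, H.Adj (.inl u) (.inl v) ↔ G.Adj u v)
    (hHW : ∀ w w' : W, H.Adj (.inr w) (.inr w') ↔ w ≠ w')
    (hdeg : ∀ v : V, H.degree (.inl v) = Fintype.card V)
    (minH maxE : ℕ)
    (hmin : IsLeast {c : ℕ | ∃ P : Fin k → Finset (V ⊕ W),
      IsPartitionOn k P ∧ c = cutValS H P} minH)
    (hmax : IsGreatest {c : ℕ | ∃ S : Finset V, S.card = k - 1 ∧
      c = (G.edgeFinset.filter fun e => ∀ x ∈ e, x ∈ S).card} maxE) :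
    (minH = (k - 1) * Fintype.card V - (k - 1).choose 2 ↔
      ∃ S : Finset V, G.IsNClique (k - 1) S) ∧
    minH = (k - 1) * Fintype.card V - maxE := by
  set n := Fintype.card V with hn_def
  have hn1 : 27 < n := by
    have : 27 ≤ k ^ 3 := by
      calc (27:ℕ) = 3^3 := by norm_num
        _ ≤ k^3 := Nat.pow_le_pow_left hk 3
    omega
  have hkn : k ≤ n := by nlinarith [hn, hk]
  obtain ⟨S₀, hS₀card, hS₀count⟩ := hmax.1
  have hmax2 : ∀ S : Finset V, S.card = k - 1 →
      (G.edgeFinset.filter fun e => ∀ x ∈ e, x ∈ S).card ≤ maxE :=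
    fun S h => hmax.2 ⟨S, h, rfl⟩
  have hmaxle : maxE ≤ (k-1).choose 2 := by
    rw [hS₀count]
    have := inside_le G S₀
    rwa [hS₀card] at this
  have hchle : (k-1).choose 2 ≤ (k-1) * n := by
    have h2 : 2 * (k-1).choose 2 = (k-1) * (k-2) := by
      rw [two_mul_choose_two]
      congr 1 <;> omega
    have h3 : (k-1) * (k-2) ≤ (k-1) * n := Nat.mul_le_mul_left _ (by omega)
    omega
  have hWpos : 0 < Fintype.card W := by
    rw [hW]
    have : 0 < k^2 := by positivity
    nlinarith
  have hWne : Nonempty W := Fintype.card_pos_iff.1 hWpos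
  -- UPPER BOUND : minH + maxE ≤ (k-1) * n
  have hupper : minH + maxE ≤ (k-1) * n := by
    set A : Finset (V ⊕ W) := S₀.image Sum.inl with hA_def
    -- enumeration of S₀
    set emb : Fin (k-1) → V := fun i => ↑(S₀.equivFin.symm (i.cast hS₀card.symm)) with hemb
    have hembS : ∀ i, emb i ∈ S₀ := fun i => (S₀.equivFin.symm (i.cast hS₀card.symm)).2
    have hembInj : Function.Injective emb := by
      intro i j hij
      have := Subtype.ext hij
      have := S₀.equivFin.symm.injective this
      exact Fin.cast_injective _ this
    set Pstar : Fin k → Finset (V ⊕ W) := fun i =>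
      if h : (i : ℕ) < k - 1 then {Sum.inl (emb ⟨i, h⟩)} else Finset.univ \ A with hPstar
    have hPs : ∀ (i : Fin k) (h : (i:ℕ) < k-1), Pstar i = {Sum.inl (emb ⟨i, h⟩)} :=
      fun i h => dif_pos h
    have hPl : ∀ (i : Fin k), ¬((i:ℕ) < k-1) → Pstar i = Finset.univ \ A :=
      fun i h => dif_neg h
    have hpart : IsPartitionOn k Pstar := by
      refine ⟨?_, ?_, ?_⟩
      · intro i
        by_cases h : (i : ℕ) < k - 1
        · rw [hPs i h]; exact Finset.singleton_nonempty _
        · rw [hPl i h]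
          obtain ⟨w⟩ := hWne
          exact ⟨Sum.inr w, by simp [hA_def]⟩
      · intro i j hij
        by_cases hi : (i : ℕ) < k - 1 <;> by_cases hj : (j : ℕ) < k - 1
        · rw [hPs i hi, hPs j hj]
          rw [Finset.disjoint_singleton]
          intro hEq
          apply hij
          have h1 := hembInj (Sum.inl_injective hEq)
          have h2 : (i:ℕ) = (j:ℕ) := congrArg (fun t : Fin (k-1) => (t : ℕ)) h1
          exact Fin.ext h2
        · rw [hPs i hi, hPl j hj]
          rw [Finset.disjoint_singleton_left]
          simp only [Finset.mem_sdiff, Finset.mem_univ, true_and, not_not]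
          exact Finset.mem_image_of_mem _ (hembS _)
        · rw [hPl i hi, hPs j hj]
          rw [Finset.disjoint_singleton_right]
          simp only [Finset.mem_sdiff, Finset.mem_univ, true_and, not_not]
          exact Finset.mem_image_of_mem _ (hembS _)
        · exfalso
          apply hij
          have hik : (i:ℕ) < k := i.2
          have hjk : (j:ℕ) < k := j.2
          exact Fin.ext (by omega)
      · intro x
        by_cases hx : x ∈ A
        · rw [hA_def] at hx
          obtain ⟨v, hv, rfl⟩ := Finset.mem_image.1 hx
          set i' : Fin S₀.card := S₀.equivFin ⟨v, hv⟩ with hi'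
          have hi'lt : (i' : ℕ) < k - 1 := by rw [← hS₀card]; exact i'.2
          refine ⟨⟨i', by omega⟩, ?_⟩
          have hcoe : ((⟨(i' : ℕ), by omega⟩ : Fin k) : ℕ) < k - 1 := hi'lt
          rw [hPs _ hcoe, Finset.mem_singleton]
          have key : emb ⟨(i' : ℕ), hcoe⟩ = v := by
            rw [hemb]
            have hc : (Fin.cast hS₀card.symm (⟨(i' : ℕ), hcoe⟩ : Fin (k-1))) = i' :=
              Fin.ext rfl
            show ((S₀.equivFin.symm (Fin.cast hS₀card.symm ⟨(i' : ℕ), hcoe⟩)) : V) = v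
            rw [hc, hi']
            simp
          rw [key]
        · refine ⟨⟨k-1, by omega⟩, ?_⟩
          rw [hPl _ (lt_irrefl (k-1))]
          simp [hx]
    have hminle : minH ≤ cutValS H Pstar := hmin.2 ⟨Pstar, hpart, rfl⟩
    -- crossing edges all touch A
    have hsub : (H.edgeFinset.filter fun e => ∀ i, ¬ ∀ x ∈ e, x ∈ Pstar i)
        ⊆ H.edgeFinset.filter (fun e => ∃ x ∈ e, x ∈ A) := by
      intro e he
      rw [Finset.mem_filter] at he ⊢
      refine ⟨he.1, ?_⟩
      have := he.2 ⟨k-1, by omega⟩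
      rw [hPl _ (lt_irrefl (k-1))] at this
      push_neg at this
      obtain ⟨x, hx, hxn⟩ := this
      refine ⟨x, hx, ?_⟩
      simp only [Finset.mem_sdiff, Finset.mem_univ, true_and, not_not] at hxn
      exact hxn
    have hsplit : (H.edgeFinset.filter (fun e => ∃ x ∈ e, x ∈ A)).card
        ≤ (H.edgeFinset.filter (fun e => ∀ x ∈ e, x ∈ A)).card
          + (H.edgeFinset.filter (fun e => (∃ x ∈ e, x ∈ A) ∧ ¬ ∀ x ∈ e, x ∈ A)).card := by
      calc (H.edgeFinset.filter (fun e => ∃ x ∈ e, x ∈ A)).card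
          ≤ ((H.edgeFinset.filter (fun e => ∀ x ∈ e, x ∈ A))
            ∪ (H.edgeFinset.filter (fun e => (∃ x ∈ e, x ∈ A) ∧ ¬ ∀ x ∈ e, x ∈ A))).card := by
            apply Finset.card_le_card
            intro e he
            rw [Finset.mem_filter] at he
            by_cases hall : ∀ x ∈ e, x ∈ A
            · exact Finset.mem_union_left _ (Finset.mem_filter.2 ⟨he.1, hall⟩)
            · exact Finset.mem_union_right _ (Finset.mem_filter.2 ⟨he.1, he.2, hall⟩)
        _ ≤ _ := Finset.card_union_le _ _
    have hmaster := master A H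
    have hsumdeg : ∑ a ∈ A, H.degree a = (k-1) * n := by
      rw [hA_def, Finset.sum_image (fun a _ b _ h => Sum.inl_injective h)]
      rw [Finset.sum_congr rfl (fun v _ => hdeg v), Finset.sum_const, hS₀card, smul_eq_mul]
    have hEin : (H.edgeFinset.filter (fun e => ∀ x ∈ e, x ∈ A)).card = maxE := by
      rw [hA_def, transfer G H hHV S₀, ← hS₀count]
    have hEq : cutValS H Pstar
        = (H.edgeFinset.filter fun e => ∀ i, ¬ ∀ x ∈ e, x ∈ Pstar i).card := by
      rw [cutValS]
      exact congrArg Finset.card (Finset.filter_congr_decidable _ _ _)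
    rw [hEq] at hminle
    have hcut : minH ≤ (H.edgeFinset.filter (fun e => ∃ x ∈ e, x ∈ A)).card :=
      le_trans hminle (Finset.card_le_card hsub)
    omega
  -- LOWER BOUND : (k-1) * n ≤ minH + maxE
  have hlower : (k-1) * n ≤ minH + maxE := by
    obtain ⟨P, hPart, hcutEq⟩ := hmin.1
    obtain ⟨hne, hdisj, hcov⟩ := hPart
    have hbridge : cutValS H P
        = (H.edgeFinset.filter fun e => ∀ i, ¬ ∀ x ∈ e, x ∈ P i).card := by
      rw [cutValS]
      exact congrArg Finset.card (Finset.filter_congr_decidable _ _ _)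
    rw [hbridge] at hcutEq
    have hsamepart : ∀ (x : V ⊕ W) (i j : Fin k), x ∈ P i → x ∈ P j → i = j := by
      intro x i j hi hj
      by_contra hij
      exact Finset.disjoint_left.1 (hdisj i j hij) hi hj
    by_cases hintact : ∃ j₀ : Fin k, ∀ w : W, Sum.inr w ∈ P j₀
    · -- Case A : W is contained in a single part
      obtain ⟨j₀, hj₀⟩ := hintact
      set Av : Fin k → Finset V := fun j => Finset.univ.filter (fun v => Sum.inl v ∈ P j)
        with hAv
      set T : Finset V := (Finset.univ.erase j₀).biUnion Av with hT
      have hAvP : ∀ j v, v ∈ Av j ↔ Sum.inl v ∈ P j := by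
        intro j v
        rw [hAv]
        simp
      have hTmem : ∀ v, v ∈ T ↔ ∃ j, j ≠ j₀ ∧ Sum.inl v ∈ P j := by
        intro v
        rw [hT]
        simp only [Finset.mem_biUnion, Finset.mem_erase, Finset.mem_univ, and_true, true_and]
        constructor
        · rintro ⟨j, hj1, hj2⟩
          exact ⟨j, hj1, (hAvP j v).1 hj2⟩
        · rintro ⟨j, hj1, hj2⟩
          exact ⟨j, hj1, (hAvP j v).2 hj2⟩
      have hdisjAv : ∀ i ∈ Finset.univ.erase j₀, ∀ j ∈ Finset.univ.erase j₀, i ≠ j →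
          Disjoint (Av i) (Av j) := by
        intro i _ j _ hij
        rw [Finset.disjoint_left]
        intro v hvi hvj
        exact hij (hsamepart _ _ _ ((hAvP i v).1 hvi) ((hAvP j v).1 hvj))
      have hTcard : T.card = ∑ j ∈ Finset.univ.erase j₀, (Av j).card :=
        Finset.card_biUnion hdisjAv
      have hAvne : ∀ j ∈ Finset.univ.erase j₀, 1 ≤ (Av j).card := by
        intro j hjmem
        have hjne : j ≠ j₀ := (Finset.mem_erase.1 hjmem).1
        obtain ⟨x, hx⟩ := hne j
        rcases x with v | w
        · exact Finset.card_pos.2 ⟨v, (hAvP j v).2 hx⟩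
        · exact absurd (hsamepart _ _ _ hx (hj₀ w)) hjne
      have herasecard : (Finset.univ.erase j₀).card = k - 1 := by
        rw [Finset.card_erase_of_mem (Finset.mem_univ _), Finset.card_univ, Fintype.card_fin]
      have hTlow : k - 1 ≤ T.card := by
        rw [hTcard]
        calc k - 1 = ∑ _j ∈ Finset.univ.erase j₀, 1 := by
              rw [Finset.sum_const, smul_eq_mul, mul_one, herasecard]
          _ ≤ _ := Finset.sum_le_sum hAvne
      have hTup : T.card ≤ n := le_trans (Finset.card_le_univ T) (le_of_eq Finset.card_univ)
      set A' : Finset (V ⊕ W) := T.image Sum.inl with hA'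
      have hsumdegA : ∑ a ∈ A', H.degree a = T.card * n := by
        rw [hA', Finset.sum_image (fun a _ b _ h => Sum.inl_injective h),
          Finset.sum_congr rfl (fun v _ => hdeg v), Finset.sum_const, smul_eq_mul]
      have hmasterA := master A' H
      have hEoneSub : H.edgeFinset.filter (fun e => (∃ x ∈ e, x ∈ A') ∧ ¬ ∀ x ∈ e, x ∈ A')
          ⊆ H.edgeFinset.filter fun e => ∀ i, ¬ ∀ x ∈ e, x ∈ P i := by
        intro e he
        rw [Finset.mem_filter] at he ⊢
        obtain ⟨heE, ⟨x, hxe, hxA⟩, hnall⟩ := he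
        refine ⟨heE, ?_⟩
        intro i hall
        rw [hA'] at hxA
        obtain ⟨v, hvT, rfl⟩ := Finset.mem_image.1 hxA
        obtain ⟨jv, hjvne, hjvP⟩ := (hTmem v).1 hvT
        have hij : i = jv := hsamepart _ _ _ (hall _ hxe) hjvP
        push_neg at hnall
        obtain ⟨y, hye, hyA⟩ := hnall
        have hyP : y ∈ P i := hall _ hye
        rcases y with u | w
        · apply hyA
          rw [hA']
          apply Finset.mem_image_of_mem
          exact (hTmem u).2 ⟨jv, hjvne, by rwa [hij] at hyP⟩
        · have hj0 : i = j₀ := hsamepart _ _ _ hyP (hj₀ w)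
          exact hjvne (by rw [← hij, hj0])
      have hEinSplit : H.edgeFinset.filter (fun e => ∀ x ∈ e, x ∈ A')
          ⊆ (H.edgeFinset.filter
              (fun e => (∀ x ∈ e, x ∈ A') ∧ ∀ i, ¬ ∀ x ∈ e, x ∈ P i))
            ∪ (Finset.univ.erase j₀).biUnion
              (fun j => H.edgeFinset.filter (fun e => ∀ x ∈ e, x ∈ (Av j).image Sum.inl)) := by
        intro e he
        rw [Finset.mem_filter] at he
        by_cases hcr : ∀ i, ¬ ∀ x ∈ e, x ∈ P i
        · exact Finset.mem_union_left _ (Finset.mem_filter.2 ⟨he.1, he.2, hcr⟩)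
        · push_neg at hcr
          obtain ⟨i, hallP⟩ := hcr
          apply Finset.mem_union_right
          have hx0 : e.out.1 ∈ e := Sym2.out_fst_mem e
          have hx0A := he.2 _ hx0
          rw [hA'] at hx0A
          obtain ⟨v, hvT, hveq⟩ := Finset.mem_image.1 hx0A
          obtain ⟨jv, hjvne, hjvP⟩ := (hTmem v).1 hvT
          have hviP : Sum.inl v ∈ P i := by
            rw [hveq]
            exact hallP _ hx0
          have hij : i = jv := hsamepart _ _ _ hviP hjvP
          refine Finset.mem_biUnion.2 ⟨jv, Finset.mem_erase.2 ⟨hjvne, Finset.mem_univ _⟩,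
            Finset.mem_filter.2 ⟨he.1, ?_⟩⟩
          intro y hye
          have hyA := he.2 y hye
          rw [hA'] at hyA
          obtain ⟨u, huT, rfl⟩ := Finset.mem_image.1 hyA
          apply Finset.mem_image_of_mem
          rw [hAvP]
          have : Sum.inl u ∈ P i := hallP _ hye
          rwa [hij] at this
      have hdisjEE : Disjoint
          (H.edgeFinset.filter (fun e => (∃ x ∈ e, x ∈ A') ∧ ¬ ∀ x ∈ e, x ∈ A'))
          (H.edgeFinset.filter
            (fun e => (∀ x ∈ e, x ∈ A') ∧ ∀ i, ¬ ∀ x ∈ e, x ∈ P i)) := by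
        rw [Finset.disjoint_left]
        intro e he1 he2
        rw [Finset.mem_filter] at he1 he2
        exact he1.2.2 he2.2.1
      have hEinCrossSub : H.edgeFinset.filter
          (fun e => (∀ x ∈ e, x ∈ A') ∧ ∀ i, ¬ ∀ x ∈ e, x ∈ P i)
          ⊆ H.edgeFinset.filter fun e => ∀ i, ¬ ∀ x ∈ e, x ∈ P i := by
        intro e he
        rw [Finset.mem_filter] at he ⊢
        exact ⟨he.1, he.2.2⟩
      have hunionCut :
          (H.edgeFinset.filter (fun e => (∃ x ∈ e, x ∈ A') ∧ ¬ ∀ x ∈ e, x ∈ A')).card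
          + (H.edgeFinset.filter
              (fun e => (∀ x ∈ e, x ∈ A') ∧ ∀ i, ¬ ∀ x ∈ e, x ∈ P i)).card
          ≤ (H.edgeFinset.filter fun e => ∀ i, ¬ ∀ x ∈ e, x ∈ P i).card := by
        rw [← Finset.card_union_of_disjoint hdisjEE]
        exact Finset.card_le_card (Finset.union_subset hEoneSub hEinCrossSub)
      have hEinBound : (H.edgeFinset.filter (fun e => ∀ x ∈ e, x ∈ A')).card
          ≤ (H.edgeFinset.filter
              (fun e => (∀ x ∈ e, x ∈ A') ∧ ∀ i, ¬ ∀ x ∈ e, x ∈ P i)).card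
            + ∑ j ∈ Finset.univ.erase j₀,
                (H.edgeFinset.filter (fun e => ∀ x ∈ e, x ∈ (Av j).image Sum.inl)).card := by
        calc (H.edgeFinset.filter (fun e => ∀ x ∈ e, x ∈ A')).card
            ≤ _ := Finset.card_le_card hEinSplit
          _ ≤ _ + ((Finset.univ.erase j₀).biUnion
              (fun j => H.edgeFinset.filter
                (fun e => ∀ x ∈ e, x ∈ (Av j).image Sum.inl))).card := Finset.card_union_le _ _
          _ ≤ _ := by
              exact Nat.add_le_add_left Finset.card_biUnion_le _
      have htransT : (H.edgeFinset.filter (fun e => ∀ x ∈ e, x ∈ A')).card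
          = (G.edgeFinset.filter (fun e => ∀ x ∈ e, x ∈ T)).card := by
        rw [hA']
        exact transfer G H hHV T
      have hsumAv : ∑ j ∈ Finset.univ.erase j₀,
          (H.edgeFinset.filter (fun e => ∀ x ∈ e, x ∈ (Av j).image Sum.inl)).card
          ≤ (T.card - (k-1) + 1).choose 2 := by
        calc ∑ j ∈ Finset.univ.erase j₀,
            (H.edgeFinset.filter (fun e => ∀ x ∈ e, x ∈ (Av j).image Sum.inl)).card
            = ∑ j ∈ Finset.univ.erase j₀,
              (G.edgeFinset.filter (fun e => ∀ x ∈ e, x ∈ Av j)).card :=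
              Finset.sum_congr rfl (fun j _ => transfer G H hHV (Av j))
          _ ≤ ∑ j ∈ Finset.univ.erase j₀, ((Av j).card).choose 2 :=
              Finset.sum_le_sum (fun j _ => inside_le G (Av j))
          _ = ∑ j ∈ Finset.univ.erase j₀, (((Av j).card - 1) + 1).choose 2 := by
              refine Finset.sum_congr rfl (fun j hj => ?_)
              have := hAvne j hj
              congr 1
              omega
          _ ≤ ((∑ j ∈ Finset.univ.erase j₀, ((Av j).card - 1)) + 1).choose 2 :=
              sum_choose2 _ _
          _ = (T.card - (k-1) + 1).choose 2 := by
              congr 2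
              have hsum1 : ∑ j ∈ Finset.univ.erase j₀, ((Av j).card - 1)
                  + (Finset.univ.erase j₀).card = ∑ j ∈ Finset.univ.erase j₀, (Av j).card := by
                have hc : ∑ j ∈ Finset.univ.erase j₀, (Av j).card
                    = ∑ j ∈ Finset.univ.erase j₀, (((Av j).card - 1) + 1) :=
                  Finset.sum_congr rfl (fun j hj => by have := hAvne j hj; omega)
                rw [hc, Finset.sum_add_distrib, Finset.sum_const, smul_eq_mul, mul_one]
              rw [herasecard] at hsum1
              omega
      have hgreedy := greedy G k maxE hmax2 (T.card - (k-1)) T (by omega)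
      have hstar := star_ineq k n T.card hk hTlow hTup
      omega
    · -- Case B : W is split among at least two parts
      push_neg at hintact
      obtain ⟨w₀⟩ := hWne
      obtain ⟨j, hj⟩ := hcov (Sum.inr w₀)
      obtain ⟨w₁, hw₁⟩ := hintact j
      have hw01 : w₀ ≠ w₁ := by
        rintro rfl
        exact hw₁ hj
      set D : Finset W := Finset.univ \ {w₀, w₁} with hD
      have hDcard : Fintype.card W ≤ D.card + 2 := by
        rw [hD, Finset.card_sdiff_of_subset (Finset.subset_univ _)]
        have hcard2 : ({w₀, w₁} : Finset W).card ≤ 2 := by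
          apply le_trans (Finset.card_insert_le _ _)
          simp
        have hcu : (Finset.univ : Finset W).card = Fintype.card W := Finset.card_univ
        omega
      have hmapsto : ∀ w ∈ D,
          (if Sum.inr w ∈ P j then s(Sum.inr w₁, Sum.inr w) else s(Sum.inr w₀, Sum.inr w))
          ∈ H.edgeFinset.filter fun e => ∀ i, ¬ ∀ x ∈ e, x ∈ P i := by
        intro w hw
        have hwD : w ≠ w₀ ∧ w ≠ w₁ := by
          rw [hD] at hw
          simp only [Finset.mem_sdiff, Finset.mem_univ, true_and, Finset.mem_insert,
            Finset.mem_singleton] at hw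
          tauto
        by_cases hwP : Sum.inr w ∈ P j
        · rw [if_pos hwP, Finset.mem_filter]
          constructor
          · rw [SimpleGraph.mem_edgeFinset, SimpleGraph.mem_edgeSet]
            exact (hHW w₁ w).2 (fun h => hwD.2 h.symm)
          · intro i hall
            have h1 : Sum.inr w ∈ P i := hall _ (by rw [Sym2.mem_iff]; right; rfl)
            have hij : i = j := hsamepart _ _ _ h1 hwP
            have h2 : Sum.inr w₁ ∈ P i := hall _ (by rw [Sym2.mem_iff]; left; rfl)
            rw [hij] at h2
            exact hw₁ h2
        · rw [if_neg hwP, Finset.mem_filter]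
          constructor
          · rw [SimpleGraph.mem_edgeFinset, SimpleGraph.mem_edgeSet]
            exact (hHW w₀ w).2 (fun h => hwD.1 h.symm)
          · intro i hall
            have h1 : Sum.inr w₀ ∈ P i := hall _ (by rw [Sym2.mem_iff]; left; rfl)
            have hij : i = j := hsamepart _ _ _ h1 hj
            have h2 : Sum.inr w ∈ P i := hall _ (by rw [Sym2.mem_iff]; right; rfl)
            rw [hij] at h2
            exact hwP h2
      have hinj : Set.InjOn
          (fun w : W => if Sum.inr w ∈ P j then s((Sum.inr w₁ : V ⊕ W), Sum.inr w)
            else s((Sum.inr w₀ : V ⊕ W), Sum.inr w)) D := by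
        intro w hw w' hw' hEq
        have hwD : w ≠ w₀ ∧ w ≠ w₁ := by
          rw [hD] at hw
          simp only [Finset.mem_coe, Finset.mem_sdiff, Finset.mem_univ, true_and,
            Finset.mem_insert, Finset.mem_singleton] at hw
          tauto
        have hw'D : w' ≠ w₀ ∧ w' ≠ w₁ := by
          rw [hD] at hw'
          simp only [Finset.mem_coe, Finset.mem_sdiff, Finset.mem_univ, true_and,
            Finset.mem_insert, Finset.mem_singleton] at hw'
          tauto
        dsimp only at hEq
        split_ifs at hEq with h1 h2 h2 <;>
          rw [Sym2.eq_iff] at hEq <;>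
          simp only [Sum.inr.injEq] at hEq
        · rcases hEq with ⟨_, h⟩ | ⟨h, h'⟩
          · exact h
          · exact absurd h' hwD.2
        · rcases hEq with ⟨h, _⟩ | ⟨h, h'⟩
          · exact absurd h.symm hw01
          · exact absurd h' hwD.1
        · rcases hEq with ⟨h, _⟩ | ⟨h, h'⟩
          · exact absurd h hw01
          · exact absurd h.symm hw'D.1
        · rcases hEq with ⟨_, h⟩ | ⟨h, h'⟩
          · exact h
          · exact absurd h' hwD.1
      have hcardD : D.card ≤ (H.edgeFinset.filter fun e => ∀ i, ¬ ∀ x ∈ e, x ∈ P i).card :=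
        Finset.card_le_card_of_injOn _ hmapsto hinj
      have he1 : (k-1)*n + n = k*n := by
        have hk1 : k - 1 + 1 = k := by omega
        calc (k-1)*n + n = ((k-1)+1)*n := by rw [Nat.succ_mul]
          _ = k*n := by rw [hk1]
      have he2 : k*n ≤ k^2*n := by
        apply Nat.mul_le_mul_right
        calc k = k*1 := by ring
          _ ≤ k*k := by exact Nat.mul_le_mul_left k (by omega)
          _ = k^2 := by ring
      omega
  have hmain : minH = (k - 1) * n - maxE := by omega
  constructor
  · constructor
    · intro h
      have hmaxEq : maxE = (k-1).choose 2 := by omega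
      refine ⟨S₀, ?_⟩
      rw [SimpleGraph.isNClique_iff]
      refine ⟨?_, hS₀card⟩
      intro x hx y hy hxy
      by_contra hna
      have := inside_lt G S₀ hx hy hxy hna
      rw [hS₀card] at this
      omega
    · rintro ⟨S, hS⟩
      rw [SimpleGraph.isNClique_iff] at hS
      obtain ⟨hcl, hcard⟩ := hS
      have : (G.edgeFinset.filter (fun e => ∀ x ∈ e, x ∈ S)).card = (k-1).choose 2 := by
        rw [clique_inside G S (fun x hx y hy hxy => hcl hx hy hxy), hcard]
      have hge : (k-1).choose 2 ≤ maxE := by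
        rw [← this]
        exact hmax2 S hcard
      have : maxE = (k-1).choose 2 := le_antisymm hmaxle hge
      omega
  · exact hmain
end

section
/- Every supervertex created by the Kawarabayashi–Thorup contraction procedure has Ω(δ²) edges of the original graph G contracted inside it; consequently, a graph G with m edges yields at most O(m/δ²) supervertices, and since every passive supervertex has degree at most 3αδ/γ with γ = 1/(100 log m), the total number of edges leaving passive supervertices is O(α·log m·m/δ). -/
/-- Counting edges leaving passive supervertices: if every supervertex absorbs at least
`c·δ²` of the `m` original edges (pairwise disjointly), then there are at most
`O(m/(c·δ²))` supervertices; and since every passive supervertex has degree at most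
`3αδ/γ` with `γ = 1/(100·log m)`, the total degree of passive supervertices is
`O((α/c)·log m·m/δ)`. -/
theorem stmt_18 : ∃ C : ℝ, 0 < C ∧
    ∀ (ι : Type) [Fintype ι] (m δ : ℕ) (α c γ : ℝ),
    2 ≤ m → 0 < δ → 1 ≤ α → 0 < c →
    γ = 1 / (100 * Real.logb 2 m) →
    ∀ absorb : ι → Finset (Fin m),
      (∀ s t : ι, s ≠ t → Disjoint (absorb s) (absorb t)) →
      (∀ s : ι, c * (δ : ℝ) ^ 2 ≤ ((absorb s).card : ℝ)) →
    ((Fintype.card ι : ℝ) ≤ C * m / (c * (δ : ℝ) ^ 2)) ∧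
    ∀ (deg : ι → ℝ) (passive : Finset ι),
      (∀ s, 0 ≤ deg s) →
      (∀ s ∈ passive, deg s ≤ 3 * α * δ / γ) →
      ∑ s ∈ passive, deg s ≤ (C / c) * α * Real.logb 2 m * m / δ := by
  refine ⟨300, by norm_num, ?_⟩
  intro ι _ m δ α c γ hm hδ hα hc hγ absorb hdisj hcard
  have hδR : (0 : ℝ) < δ := by exact_mod_cast hδ
  have hcd : (0 : ℝ) < c * (δ : ℝ) ^ 2 := by positivity
  have hmR : (2 : ℝ) ≤ m := by exact_mod_cast hm
  have hlog : (1 : ℝ) ≤ Real.logb 2 m := by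
    rw [show (1:ℝ) = Real.logb 2 2 by simp]
    exact Real.logb_le_logb_of_le (by norm_num) (by norm_num) hmR
  -- union bound
  have hsum : ∑ s : ι, ((absorb s).card : ℝ) ≤ m := by
    have := Finset.card_biUnion (s := (Finset.univ : Finset ι)) (t := absorb)
      (fun s _ t _ hst => hdisj s t hst)
    have hle : (Finset.univ.biUnion absorb).card ≤ m := by
      simpa using Finset.card_le_card (Finset.subset_univ _) |>.trans
        (le_of_eq (Fintype.card_fin m))
    have : (∑ s : ι, (absorb s).card) ≤ m := this ▸ hle
    exact_mod_cast this
  have hcardι : (Fintype.card ι : ℝ) * (c * (δ : ℝ) ^ 2) ≤ m := by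
    calc (Fintype.card ι : ℝ) * (c * (δ : ℝ) ^ 2)
        = ∑ _s : ι, c * (δ : ℝ) ^ 2 := by
          simp [Finset.sum_const, mul_comm]
      _ ≤ ∑ s : ι, ((absorb s).card : ℝ) := Finset.sum_le_sum (fun s _ => hcard s)
      _ ≤ m := hsum
  have hcard1 : (Fintype.card ι : ℝ) ≤ (m : ℝ) / (c * (δ : ℝ) ^ 2) :=
    (le_div_iff₀ hcd).mpr hcardι
  constructor
  · calc (Fintype.card ι : ℝ) ≤ (m : ℝ) / (c * (δ : ℝ) ^ 2) := hcard1
      _ ≤ 300 * m / (c * (δ : ℝ) ^ 2) := by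
        gcongr
        nlinarith [hmR]
  · intro deg passive hdeg hpass
    have hγval : 3 * α * δ / γ = 300 * α * δ * Real.logb 2 m := by
      rw [hγ]
      field_simp
      ring
    have hbound : ∑ s ∈ passive, deg s ≤ passive.card * (300 * α * δ * Real.logb 2 m) := by
      calc ∑ s ∈ passive, deg s ≤ ∑ _s ∈ passive, (300 * α * δ * Real.logb 2 m) :=
            Finset.sum_le_sum (fun s hs => (hpass s hs).trans_eq hγval)
        _ = passive.card * (300 * α * δ * Real.logb 2 m) := by
            simp [Finset.sum_const, mul_comm]
    have hpc : (passive.card : ℝ) ≤ (m : ℝ) / (c * (δ : ℝ) ^ 2) := by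
      refine le_trans ?_ hcard1
      have := Finset.card_le_card (Finset.subset_univ passive)
      rw [Finset.card_univ] at this
      exact_mod_cast this
    have hpos : (0 : ℝ) ≤ 300 * α * δ * Real.logb 2 m := by positivity
    calc ∑ s ∈ passive, deg s
        ≤ passive.card * (300 * α * δ * Real.logb 2 m) := hbound
      _ ≤ ((m : ℝ) / (c * (δ : ℝ) ^ 2)) * (300 * α * δ * Real.logb 2 m) :=
          mul_le_mul_of_nonneg_right hpc hpos
      _ = (300 / c) * α * Real.logb 2 m * m / δ := by
          field_simp
end
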